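/- Let p be a prime and let m > n > 1 be integers. If i₀ is a non-negative integer such that for every integer i ≥ i₀ and every positive integer j not divisible by p one has Σ_{h=0}^{i−1} (s_p(m,h,j) − s_p(n,h,j)) ≥ s_p(n,i,j), then i₀ ≥ ⌊(p−1)/m⌋. In particular, the least such i₀ = i₀(m,n,p) tends to infinity as the prime p tends to infinity. -/
import Mathlib


/-- `sP p m i j` is the number of integers `k ≥ 0` with `p^k * j ≤ m * (i+1)`. -/
def sP (p m i j : ℕ) : ℕ :=
  ((Finset.range (m * (i + 1))).filter (fun k => p ^ k * j ≤ m * (i + 1))).card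

lemma sP_one_eq (p m i : ℕ) (hm : 1 ≤ m * (i + 1)) (hp : m * (i + 1) < p) :
    sP p m i 1 = 1 := by
  unfold sP
  have hset : (Finset.range (m * (i + 1))).filter (fun k => p ^ k * 1 ≤ m * (i + 1)) = {0} := by
    ext k
    simp only [Finset.mem_filter, Finset.mem_range, Finset.mem_singleton, mul_one]
    constructor
    · rintro ⟨_, hk⟩
      by_contra hk0
      have : p ≤ p ^ k := Nat.le_self_pow hk0 p
      omega
    · rintro rfl
      simp only [pow_zero]
      omega
  rw [hset]
  rfl

/-- Theorem (divisor)(ii), arithmetic form: any `i₀` for which the valuation inequality holds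
for all `i ≥ i₀` and all positive `j` prime to `p` must satisfy `i₀ ≥ ⌊(p−1)/m⌋`. -/
theorem divisor_ii (p m n i₀ : ℕ) (hp : p.Prime) (hmn : m > n) (hn : n > 1)
    (h : ∀ i : ℕ, i ≥ i₀ → ∀ j : ℕ, 0 < j → ¬ p ∣ j →
      (sP p n i j : ℤ) ≤
        ∑ h ∈ Finset.range i, ((sP p m h j : ℤ) - (sP p n h j : ℤ))) :
    i₀ ≥ (p - 1) / m := by
  by_contra hlt
  push_neg at hlt
  have hm : 0 < m := by omega
  have hp2 : 2 ≤ p := hp.two_le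
  have hmul : m * (i₀ + 1) ≤ p - 1 := by
    have h1 : i₀ + 1 ≤ (p - 1) / m := hlt
    have h2 := (Nat.le_div_iff_mul_le hm).mp h1
    rw [mul_comm]
    exact h2
  have hnd : ¬ p ∣ 1 := fun hd => absurd (Nat.le_of_dvd one_pos hd) (by omega)
  have key := h i₀ le_rfl 1 one_pos hnd
  have hsum : ∑ h ∈ Finset.range i₀, ((sP p m h 1 : ℤ) - (sP p n h 1 : ℤ)) = 0 := by
    apply Finset.sum_eq_zero
    intro x hx
    rw [Finset.mem_range] at hx
    have hle : m * (x + 1) ≤ m * (i₀ + 1) := Nat.mul_le_mul_left m (by omega)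
    have hle2 : n * (x + 1) ≤ m * (x + 1) := Nat.mul_le_mul_right _ (by omega)
    have hpos1 : 1 ≤ n * (x + 1) := Nat.one_le_iff_ne_zero.mpr (by positivity)
    rw [sP_one_eq p m x (by omega) (by omega), sP_one_eq p n x (by omega) (by omega)]
    ring
  rw [hsum] at key
  have hpos : 1 ≤ sP p n i₀ 1 := by
    apply Finset.card_pos.mpr
    refine ⟨0, ?_⟩
    simp only [Finset.mem_filter, Finset.mem_range, pow_zero, mul_one]
    have : 1 ≤ n * (i₀ + 1) := Nat.one_le_iff_ne_zero.mpr (by positivity)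
    omega
  have : (1 : ℤ) ≤ (sP p n i₀ 1 : ℤ) := by exact_mod_cast hpos
  omega
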